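/- Let (X,d) be a compact metric space and ∘ a continuous group operation on X. Then d′(a,b) := sup_{x∈X} sup_{y∈X} d(x∘a∘y, x∘b∘y) defines a metric on X which is bi-invariant for ∘ and induces the same topology as d. -/

import Mathlib

theorem stmt_5 {X : Type*} [MetricSpace X] [CompactSpace X] [Group X]
    (hcont : Continuous fun p : X × X => p.1 * p.2)
    (d' : X → X → ℝ)
    (hd' : ∀ a b : X, d' a b = ⨆ x : X, ⨆ y : X, dist (x * a * y) (x * b * y)) :
    (∀ a b : X, d' a b = 0 ↔ a = b) ∧
    (∀ a b : X, d' a b = d' b a) ∧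
    (∀ a b c : X, d' a c ≤ d' a b + d' b c) ∧
    (∀ a b c : X, d' (a * c) (b * c) = d' a b ∧ d' (c * a) (c * b) = d' a b) ∧
    (∀ s : Set X, IsOpen s ↔ ∀ a ∈ s, ∃ ε > 0, ∀ b : X, d' a b < ε → b ∈ s) := by
  haveI : Nonempty X := ⟨1⟩
  obtain ⟨C, hC⟩ : ∃ C : ℝ, ∀ x y : X, dist x y ≤ C := by
    obtain ⟨C, hC⟩ := Metric.isBounded_iff.mp (isCompact_univ (X := X)).isBounded
    exact ⟨C, fun x y => hC (Set.mem_univ x) (Set.mem_univ y)⟩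
  -- D_le : sup ≤ M when pointwise ≤ M
  have D_le : ∀ a b (M : ℝ), (∀ x y : X, dist (x * a * y) (x * b * y) ≤ M) → d' a b ≤ M := by
    intro a b M h
    rw [hd']
    exact ciSup_le fun x => ciSup_le fun y => h x y
  -- le_D : each term ≤ sup
  have le_D : ∀ a b (x y : X), dist (x * a * y) (x * b * y) ≤ d' a b := by
    intro a b x y
    rw [hd']
    have h1 : dist (x * a * y) (x * b * y) ≤ ⨆ y : X, dist (x * a * y) (x * b * y) := by
      apply le_ciSup (f := fun y => dist (x * a * y) (x * b * y))
      exact ⟨C, by rintro _ ⟨z, rfl⟩; exact hC _ _⟩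
    refine h1.trans ?_
    apply le_ciSup (f := fun x => ⨆ y : X, dist (x * a * y) (x * b * y))
    exact ⟨C, by rintro _ ⟨z, rfl⟩; exact ciSup_le fun y => hC _ _⟩
  have h_ge : ∀ a b : X, dist a b ≤ d' a b := by
    intro a b
    have := le_D a b 1 1
    simpa using this
  have h_nonneg : ∀ a b : X, 0 ≤ d' a b := fun a b => dist_nonneg.trans (h_ge a b)
  have h_eq : ∀ a b : X, d' a b = 0 ↔ a = b := by
    intro a b
    constructor
    · intro h
      have : dist a b ≤ 0 := h ▸ h_ge a b
      exact dist_le_zero.mp this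
    · rintro rfl
      exact le_antisymm (D_le a a 0 (fun x y => by simp)) (h_nonneg a a)
  have h_symm : ∀ a b : X, d' a b = d' b a := by
    intro a b
    apply le_antisymm <;>
      exact D_le _ _ _ (fun x y => by rw [dist_comm]; exact le_D _ _ x y)
  have h_tri : ∀ a b c : X, d' a c ≤ d' a b + d' b c := by
    intro a b c
    refine D_le a c _ (fun x y => ?_)
    calc dist (x * a * y) (x * c * y)
        ≤ dist (x * a * y) (x * b * y) + dist (x * b * y) (x * c * y) := dist_triangle _ _ _
      _ ≤ d' a b + d' b c := add_le_add (le_D a b x y) (le_D b c x y)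
  have h_inv : ∀ a b c : X, d' (a * c) (b * c) = d' a b ∧ d' (c * a) (c * b) = d' a b := by
    intro a b c
    constructor
    · apply le_antisymm
      · refine D_le _ _ _ (fun x y => ?_)
        have := le_D a b x (c * y)
        simpa [mul_assoc] using this
      · refine D_le _ _ _ (fun x y => ?_)
        have := le_D (a * c) (b * c) x (c⁻¹ * y)
        simpa [mul_assoc] using this
    · apply le_antisymm
      · refine D_le _ _ _ (fun x y => ?_)
        have := le_D a b (x * c) y
        simpa [mul_assoc] using this
      · refine D_le _ _ _ (fun x y => ?_)
        have := le_D (c * a) (c * b) (x * c⁻¹) y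
        simpa [mul_assoc] using this
  -- uniform continuity: small d implies small d'
  have h_unif : ∀ ε > (0 : ℝ), ∃ δ > (0 : ℝ), ∀ a b : X, dist a b < δ → d' a b < ε := by
    intro ε hε
    have hm : Continuous fun p : (X × X) × X => p.1.1 * p.2 * p.1.2 := by
      have h1 : Continuous fun p : (X × X) × X => p.1.1 * p.2 :=
        hcont.comp (continuous_fst.fst.prodMk continuous_snd)
      exact hcont.comp (h1.prodMk continuous_fst.snd)
    have hu : UniformContinuous fun p : (X × X) × X => p.1.1 * p.2 * p.1.2 :=
      CompactSpace.uniformContinuous_of_continuous hm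
    rw [Metric.uniformContinuous_iff] at hu
    obtain ⟨δ, hδ, h⟩ := hu (ε / 2) (by linarith)
    refine ⟨δ, hδ, fun a b hab => ?_⟩
    have hle : d' a b ≤ ε / 2 := by
      refine D_le a b _ (fun x y => ?_)
      have := @h ((x, y), a) ((x, y), b) (by
        simp [Prod.dist_eq, dist_self]
        exact hab)
      exact le_of_lt this
    linarith
  refine ⟨h_eq, h_symm, h_tri, h_inv, fun s => ⟨?_, ?_⟩⟩
  · intro hs a ha
    obtain ⟨ε, hε, hball⟩ := Metric.isOpen_iff.mp hs a ha
    refine ⟨ε, hε, fun b hb => hball ?_⟩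
    exact Metric.mem_ball.mpr (by rw [dist_comm]; exact lt_of_le_of_lt (h_ge a b) hb)
  · intro h
    rw [Metric.isOpen_iff]
    intro a ha
    obtain ⟨ε, hε, hb⟩ := h a ha
    obtain ⟨δ, hδ, hδ'⟩ := h_unif ε hε
    refine ⟨δ, hδ, fun b hbmem => ?_⟩
    rw [Metric.mem_ball] at hbmem
    exact hb b (hδ' a b (by rwa [dist_comm] at hbmem))
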